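/- Let A be a d × r real matrix with nonnegative entries, Z = (Z₁,…,Z_r) a standard Gaussian vector in ℝ^r, and X = AZ. Then X satisfies the componentwise co-monotony principle: for all bounded Borel functions Φ, Ψ : ℝ^d → ℝ that are componentwise co-monotone, E[Φ(X)Ψ(X)] ≥ E[Φ(X)]E[Ψ(X)]. -/

import Mathlib

open MeasureTheory ProbabilityTheory

/-- Integrability of bounded measurable functions on a probability measure. -/
lemma integrable_of_bdd {α : Type*} [MeasurableSpace α] {μ : Measure α}
    [IsFiniteMeasure μ] {f : α → ℝ} (hf : AEStronglyMeasurable f μ) {C : ℝ}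
    (hb : ∀ x, |f x| ≤ C) : Integrable f μ :=
  (integrable_const C).mono' hf (Filter.Eventually.of_forall fun x => by
    simpa using hb x)

/-- 1D Chebyshev/FKG: co-monotone bounded functions are positively correlated. -/
lemma chebyshev_corr {α : Type*} [MeasurableSpace α] (μ : Measure α)
    [IsProbabilityMeasure μ] (f g : α → ℝ) (hf : Measurable f) (hg : Measurable g)
    {Cf Cg : ℝ} (hfb : ∀ x, |f x| ≤ Cf) (hgb : ∀ x, |g x| ≤ Cg)
    (hc : ∀ x y, 0 ≤ (f x - f y) * (g x - g y)) :
    (∫ x, f x ∂μ) * ∫ x, g x ∂μ ≤ ∫ x, f x * g x ∂μ := by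
  have hif : Integrable f μ := integrable_of_bdd hf.aestronglyMeasurable hfb
  have hig : Integrable g μ := integrable_of_bdd hg.aestronglyMeasurable hgb
  have hmul : ∀ {u v : α → ℝ}, Measurable u → Measurable v →
      (∀ x, |u x| ≤ Cf) → (∀ x, |v x| ≤ Cg) →
      Integrable (fun p : α × α => u p.1 * v p.2) (μ.prod μ) := by
    intro u v hu hv hub hvb
    refine integrable_of_bdd (C := |Cf| * |Cg|)
      (((hu.comp measurable_fst).mul (hv.comp measurable_snd)).aestronglyMeasurable) ?_
    intro p
    rw [abs_mul]
    exact mul_le_mul ((hub p.1).trans (le_abs_self _)) ((hvb p.2).trans (le_abs_self _))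
      (abs_nonneg _) (abs_nonneg _)
  have h11 : Integrable (fun p : α × α => f p.1 * g p.1) (μ.prod μ) := by
    refine integrable_of_bdd (C := |Cf| * |Cg|)
      (((hf.comp measurable_fst).mul (hg.comp measurable_fst)).aestronglyMeasurable) ?_
    intro p; rw [abs_mul]
    exact mul_le_mul ((hfb p.1).trans (le_abs_self _)) ((hgb p.1).trans (le_abs_self _))
      (abs_nonneg _) (abs_nonneg _)
  have h22 : Integrable (fun p : α × α => f p.2 * g p.2) (μ.prod μ) := by
    refine integrable_of_bdd (C := |Cf| * |Cg|)
      (((hf.comp measurable_snd).mul (hg.comp measurable_snd)).aestronglyMeasurable) ?_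
    intro p; rw [abs_mul]
    exact mul_le_mul ((hfb p.2).trans (le_abs_self _)) ((hgb p.2).trans (le_abs_self _))
      (abs_nonneg _) (abs_nonneg _)
  have h12 : Integrable (fun p : α × α => f p.1 * g p.2) (μ.prod μ) := hmul hf hg hfb hgb
  have h21 : Integrable (fun p : α × α => f p.2 * g p.1) (μ.prod μ) := by
    refine integrable_of_bdd (C := |Cf| * |Cg|)
      (((hf.comp measurable_snd).mul (hg.comp measurable_fst)).aestronglyMeasurable) ?_
    intro p; rw [abs_mul]
    exact mul_le_mul ((hfb p.2).trans (le_abs_self _)) ((hgb p.1).trans (le_abs_self _))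
      (abs_nonneg _) (abs_nonneg _)
  have key : 0 ≤ ∫ p : α × α, (f p.1 - f p.2) * (g p.1 - g p.2) ∂(μ.prod μ) :=
    integral_nonneg fun p => hc p.1 p.2
  rw [show (fun p : α × α => (f p.1 - f p.2) * (g p.1 - g p.2))
      = fun p => (f p.1 * g p.1 + f p.2 * g p.2) - (f p.1 * g p.2 + f p.2 * g p.1) from
      funext fun p => by ring] at key
  have hS1 : Integrable (fun p : α × α => f p.1 * g p.1 + f p.2 * g p.2) (μ.prod μ) := h11.add h22
  have hS2 : Integrable (fun p : α × α => f p.1 * g p.2 + f p.2 * g p.1) (μ.prod μ) := h12.add h21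
  simp only [integral_sub hS1 hS2, integral_add h11 h22, integral_add h12 h21] at key
  -- compute the four integrals
  have e11 : ∫ p : α × α, f p.1 * g p.1 ∂(μ.prod μ) = ∫ x, f x * g x ∂μ := by
    simpa using integral_prod_mul (μ := μ) (ν := μ) (fun x => f x * g x) (fun _ => (1:ℝ))
  have e22 : ∫ p : α × α, f p.2 * g p.2 ∂(μ.prod μ) = ∫ x, f x * g x ∂μ := by
    simpa using integral_prod_mul (μ := μ) (ν := μ) (fun _ => (1:ℝ)) (fun x => f x * g x)
  have e12 : ∫ p : α × α, f p.1 * g p.2 ∂(μ.prod μ) = (∫ x, f x ∂μ) * ∫ x, g x ∂μ :=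
    integral_prod_mul f g
  have e21 : ∫ p : α × α, f p.2 * g p.1 ∂(μ.prod μ) = (∫ x, f x ∂μ) * ∫ x, g x ∂μ := by
    have h2 := integral_prod_mul (μ := μ) (ν := μ) g f
    have h : ∫ p : α × α, f p.2 * g p.1 ∂(μ.prod μ) = ∫ p : α × α, g p.1 * f p.2 ∂(μ.prod μ) := by
      congr 1; funext p; ring
    rw [h, h2]; ring
  rw [e11, e22, e12, e21] at key
  linarith

lemma mul_nonneg_of_nonpos_nonpos' {a b : ℝ} (ha : a ≤ 0) (hb : b ≤ 0) : 0 ≤ a * b := by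
  nlinarith

/-- Monotonicity of `Fin.insertNth 0` for the constant family `ℝ`. -/
lemma insertNth_zero_mono {n : ℕ} {t t' : ℝ} {y y' : Fin n → ℝ}
    (ht : t ≤ t') (hy : y ≤ y') :
    (Fin.insertNth 0 t y : Fin (n + 1) → ℝ) ≤ Fin.insertNth 0 t' y' := by
  intro i
  induction i using Fin.cases with
  | zero => simpa using ht
  | succ j => simpa [Fin.insertNth_zero] using hy j

/-- FKG / Harris inequality for finite products of probability measures on `ℝ`. -/
lemma fkg_pi : ∀ {n : ℕ} (μ : Fin n → Measure ℝ), (∀ i, IsProbabilityMeasure (μ i)) →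
    ∀ (f g : (Fin n → ℝ) → ℝ), Measurable f → Measurable g →
    ∀ {Cf Cg : ℝ}, (∀ x, |f x| ≤ Cf) → (∀ x, |g x| ≤ Cg) →
    ((Monotone f ∧ Monotone g) ∨ (Antitone f ∧ Antitone g)) →
    (∫ x, f x ∂Measure.pi μ) * ∫ x, g x ∂Measure.pi μ ≤ ∫ x, f x * g x ∂Measure.pi μ := by
  intro n
  induction n with
  | zero =>
    intro μ hμ f g hf hg Cf Cg hfb hgb hmono
    haveI := fun i => hμ i
    haveI : IsProbabilityMeasure (Measure.pi μ) := inferInstance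
    have hsub : Subsingleton (Fin 0 → ℝ) := ⟨fun a b => funext fun i => i.elim0⟩
    have hx : ∀ x : Fin 0 → ℝ, x = (fun i => i.elim0) := fun x => hsub.elim x _
    have hfc : f = fun _ => f (fun i => i.elim0) := funext fun x => by rw [hx x]
    have hgc : g = fun _ => g (fun i => i.elim0) := funext fun x => by rw [hx x]
    rw [hfc, hgc]
    simp [integral_const]
  | succ n IH =>
    intro μ hμ f g hf hg Cf Cg hfb hgb hmono
    haveI := fun i => hμ i
    haveI : IsProbabilityMeasure (Measure.pi fun j : Fin n => μ (Fin.succAbove 0 j)) :=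
      inferInstance
    -- the measurable equivalence and measure preservation
    have mp := measurePreserving_piFinSuccAbove μ 0
    have me : MeasurableEmbedding (MeasurableEquiv.piFinSuccAbove (fun _ : Fin (n+1) => ℝ) 0) :=
      (MeasurableEquiv.piFinSuccAbove (fun _ : Fin (n+1) => ℝ) 0).measurableEmbedding
    have hins : Measurable (fun p : ℝ × (Fin n → ℝ) => (Fin.insertNth 0 p.1 p.2 : Fin (n+1) → ℝ)) := by
      apply measurable_pi_iff.2
      intro i
      induction i using Fin.cases with
      | zero => simpa using measurable_fst
      | succ j =>
        simp only [Fin.insertNth_zero]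
        exact (measurable_pi_apply j).comp measurable_snd
    have transfer : ∀ h : (Fin (n+1) → ℝ) → ℝ,
        ∫ x, h x ∂Measure.pi μ = ∫ p : ℝ × (Fin n → ℝ), h (Fin.insertNth 0 p.1 p.2)
          ∂((μ 0).prod (Measure.pi fun j : Fin n => μ (Fin.succAbove 0 j))) := by
      intro h
      rw [← mp.integral_comp me (fun p : ℝ × (Fin n → ℝ) => h (Fin.insertNth 0 p.1 p.2))]
      apply integral_congr_ae
      filter_upwards with x
      congr 1
      rw [MeasurableEquiv.piFinSuccAbove_apply]
      exact (Fin.insertNth_self_removeNth 0 x).symm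
    -- section functions
    set μ' : Measure (Fin n → ℝ) := Measure.pi fun j : Fin n => μ (Fin.succAbove 0 j) with hμ'
    have hsec_f : ∀ t : ℝ, Measurable (fun y : Fin n → ℝ => f (Fin.insertNth 0 t y)) :=
      fun t => hf.comp (hins.comp measurable_prodMk_left)
    have hsec_g : ∀ t : ℝ, Measurable (fun y : Fin n → ℝ => g (Fin.insertNth 0 t y)) :=
      fun t => hg.comp (hins.comp measurable_prodMk_left)
    -- the conditional expectations
    set F : ℝ → ℝ := fun t => ∫ y, f (Fin.insertNth 0 t y) ∂μ' with hF
    set G : ℝ → ℝ := fun t => ∫ y, g (Fin.insertNth 0 t y) ∂μ' with hG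
    have hFb : ∀ t, |F t| ≤ |Cf| := by
      intro t
      calc |F t| ≤ ∫ y, |f (Fin.insertNth 0 t y)| ∂μ' := by
            simpa only [Real.norm_eq_abs] using norm_integral_le_integral_norm (μ := μ')
              (fun y => f (Fin.insertNth 0 t y))
        _ ≤ ∫ _y, |Cf| ∂μ' := by
            apply integral_mono_of_nonneg (Filter.Eventually.of_forall fun y => abs_nonneg _)
              (integrable_const _)
            exact Filter.Eventually.of_forall fun y => (hfb _).trans (le_abs_self _)
        _ = |Cf| := by simp
    have hGb : ∀ t, |G t| ≤ |Cg| := by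
      intro t
      calc |G t| ≤ ∫ y, |g (Fin.insertNth 0 t y)| ∂μ' := by
            simpa only [Real.norm_eq_abs] using norm_integral_le_integral_norm (μ := μ')
              (fun y => g (Fin.insertNth 0 t y))
        _ ≤ ∫ _y, |Cg| ∂μ' := by
            apply integral_mono_of_nonneg (Filter.Eventually.of_forall fun y => abs_nonneg _)
              (integrable_const _)
            exact Filter.Eventually.of_forall fun y => (hgb _).trans (le_abs_self _)
        _ = |Cg| := by simp
    have hFm : Measurable F := by
      have : StronglyMeasurable fun p : ℝ × (Fin n → ℝ) => f (Fin.insertNth 0 p.1 p.2) :=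
        (hf.comp hins).stronglyMeasurable
      exact this.integral_prod_right'.measurable
    have hGm : Measurable G := by
      have : StronglyMeasurable fun p : ℝ × (Fin n → ℝ) => g (Fin.insertNth 0 p.1 p.2) :=
        (hg.comp hins).stronglyMeasurable
      exact this.integral_prod_right'.measurable
    -- monotonicity transfer
    have hmono_sec : ∀ t : ℝ,
        (Monotone (fun y => f (Fin.insertNth 0 t y)) ∧ Monotone (fun y => g (Fin.insertNth 0 t y)))
        ∨ (Antitone (fun y => f (Fin.insertNth 0 t y)) ∧ Antitone (fun y => g (Fin.insertNth 0 t y))) := by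
      intro t
      rcases hmono with ⟨h1, h2⟩ | ⟨h1, h2⟩
      · exact Or.inl ⟨fun y y' hy => h1 (insertNth_zero_mono le_rfl hy),
          fun y y' hy => h2 (insertNth_zero_mono le_rfl hy)⟩
      · exact Or.inr ⟨fun y y' hy => h1 (insertNth_zero_mono le_rfl hy),
          fun y y' hy => h2 (insertNth_zero_mono le_rfl hy)⟩
    have hint_sec_f : ∀ t : ℝ, Integrable (fun y => f (Fin.insertNth 0 t y)) μ' :=
      fun t => integrable_of_bdd (hsec_f t).aestronglyMeasurable (fun y => hfb _)
    have hint_sec_g : ∀ t : ℝ, Integrable (fun y => g (Fin.insertNth 0 t y)) μ' :=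
      fun t => integrable_of_bdd (hsec_g t).aestronglyMeasurable (fun y => hgb _)
    have hFGmono : (Monotone F ∧ Monotone G) ∨ (Antitone F ∧ Antitone G) := by
      rcases hmono with ⟨h1, h2⟩ | ⟨h1, h2⟩
      · refine Or.inl ⟨fun s t hst => ?_, fun s t hst => ?_⟩
        · exact integral_mono (hint_sec_f s) (hint_sec_f t)
            (fun y => h1 (insertNth_zero_mono hst le_rfl))
        · exact integral_mono (hint_sec_g s) (hint_sec_g t)
            (fun y => h2 (insertNth_zero_mono hst le_rfl))
      · refine Or.inr ⟨fun s t hst => ?_, fun s t hst => ?_⟩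
        · exact integral_mono (hint_sec_f t) (hint_sec_f s)
            (fun y => h1 (insertNth_zero_mono hst le_rfl))
        · exact integral_mono (hint_sec_g t) (hint_sec_g s)
            (fun y => h2 (insertNth_zero_mono hst le_rfl))
    -- apply the induction hypothesis pointwise
    have hIH : ∀ t : ℝ, F t * G t ≤ ∫ y, f (Fin.insertNth 0 t y) * g (Fin.insertNth 0 t y) ∂μ' := by
      intro t
      exact IH (fun j => μ (Fin.succAbove 0 j)) (fun j => hμ _) _ _ (hsec_f t) (hsec_g t)
        (fun y => hfb _) (fun y => hgb _) (hmono_sec t)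
    -- Fubini for the product
    have hintf : Integrable (fun p : ℝ × (Fin n → ℝ) => f (Fin.insertNth 0 p.1 p.2)) ((μ 0).prod μ') :=
      integrable_of_bdd (hf.comp hins).aestronglyMeasurable (fun p => hfb _)
    have hintg : Integrable (fun p : ℝ × (Fin n → ℝ) => g (Fin.insertNth 0 p.1 p.2)) ((μ 0).prod μ') :=
      integrable_of_bdd (hg.comp hins).aestronglyMeasurable (fun p => hgb _)
    have hintfg : Integrable (fun p : ℝ × (Fin n → ℝ) =>
        f (Fin.insertNth 0 p.1 p.2) * g (Fin.insertNth 0 p.1 p.2)) ((μ 0).prod μ') := by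
      refine integrable_of_bdd (C := |Cf| * |Cg|)
        (((hf.comp hins).mul (hg.comp hins)).aestronglyMeasurable) ?_
      intro p
      rw [abs_mul]
      exact mul_le_mul ((hfb _).trans (le_abs_self _)) ((hgb _).trans (le_abs_self _))
        (abs_nonneg _) (abs_nonneg _)
    have eqf : ∫ x, f x ∂Measure.pi μ = ∫ t, F t ∂(μ 0) := by
      rw [transfer f, integral_prod _ hintf]
    have eqg : ∫ x, g x ∂Measure.pi μ = ∫ t, G t ∂(μ 0) := by
      rw [transfer g, integral_prod _ hintg]
    have eqfg : ∫ x, f x * g x ∂Measure.pi μ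
        = ∫ t, (∫ y, f (Fin.insertNth 0 t y) * g (Fin.insertNth 0 t y) ∂μ') ∂(μ 0) := by
      rw [transfer (fun x => f x * g x), integral_prod _ hintfg]
    -- integrability of the outer functions
    have hintF : Integrable F (μ 0) := integrable_of_bdd hFm.aestronglyMeasurable hFb
    have hintG : Integrable G (μ 0) := integrable_of_bdd hGm.aestronglyMeasurable hGb
    have hinner_m : Measurable fun t => ∫ y, f (Fin.insertNth 0 t y) * g (Fin.insertNth 0 t y) ∂μ' := by
      have : StronglyMeasurable fun p : ℝ × (Fin n → ℝ) =>
          f (Fin.insertNth 0 p.1 p.2) * g (Fin.insertNth 0 p.1 p.2) :=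
        ((hf.comp hins).mul (hg.comp hins)).stronglyMeasurable
      exact this.integral_prod_right'.measurable
    have hinner_b : ∀ t, |∫ y, f (Fin.insertNth 0 t y) * g (Fin.insertNth 0 t y) ∂μ'| ≤ |Cf| * |Cg| := by
      intro t
      calc |∫ y, f (Fin.insertNth 0 t y) * g (Fin.insertNth 0 t y) ∂μ'|
          ≤ ∫ y, |f (Fin.insertNth 0 t y) * g (Fin.insertNth 0 t y)| ∂μ' := by
            simpa only [Real.norm_eq_abs] using norm_integral_le_integral_norm (μ := μ')
              (fun y => f (Fin.insertNth 0 t y) * g (Fin.insertNth 0 t y))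
        _ ≤ ∫ _y, |Cf| * |Cg| ∂μ' := by
            apply integral_mono_of_nonneg (Filter.Eventually.of_forall fun y => abs_nonneg _)
              (integrable_const _)
            refine Filter.Eventually.of_forall fun y => ?_
            simp only [abs_mul]
            exact mul_le_mul ((hfb _).trans (le_abs_self _)) ((hgb _).trans (le_abs_self _))
              (abs_nonneg _) (abs_nonneg _)
        _ = |Cf| * |Cg| := by simp
    have hinner_int : Integrable
        (fun t => ∫ y, f (Fin.insertNth 0 t y) * g (Fin.insertNth 0 t y) ∂μ') (μ 0) :=
      integrable_of_bdd hinner_m.aestronglyMeasurable hinner_b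
    -- outer Chebyshev
    have hcomono : ∀ s t : ℝ, 0 ≤ (F s - F t) * (G s - G t) := by
      intro s t
      rcases le_total t s with hts | hst
      · rcases hFGmono with ⟨h1, h2⟩ | ⟨h1, h2⟩
        · exact mul_nonneg (sub_nonneg.2 (h1 hts)) (sub_nonneg.2 (h2 hts))
        · exact mul_nonneg_of_nonpos_nonpos' (sub_nonpos.2 (h1 hts)) (sub_nonpos.2 (h2 hts))
      · rcases hFGmono with ⟨h1, h2⟩ | ⟨h1, h2⟩
        · exact mul_nonneg_of_nonpos_nonpos' (sub_nonpos.2 (h1 hst)) (sub_nonpos.2 (h2 hst))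
        · exact mul_nonneg (sub_nonneg.2 (h1 hst)) (sub_nonneg.2 (h2 hst))
    have cheb := chebyshev_corr (μ 0) F G hFm hGm hFb hGb hcomono
    have step : ∫ t, F t * G t ∂(μ 0)
        ≤ ∫ t, (∫ y, f (Fin.insertNth 0 t y) * g (Fin.insertNth 0 t y) ∂μ') ∂(μ 0) :=
      integral_mono (integrable_of_bdd (C := |Cf| * |Cg|) (hFm.mul hGm).aestronglyMeasurable
        (fun t => by
          show |F t * G t| ≤ _
          rw [abs_mul]
          exact mul_le_mul (hFb t) (hGb t) (abs_nonneg _) (abs_nonneg _))) hinner_int hIH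
    rw [eqf, eqg, eqfg]
    exact le_trans cheb step

theorem comonotony_nonneg_matrix_gaussian
    {Ω : Type*} [MeasurableSpace Ω] (P : Measure Ω) [IsProbabilityMeasure P]
    {d r : ℕ} (A : Matrix (Fin d) (Fin r) ℝ) (hA : ∀ i j, 0 ≤ A i j)
    (Z : Ω → (Fin r → ℝ)) (hZm : Measurable Z)
    (hZ : Measure.map Z P = Measure.pi (fun _ : Fin r => gaussianReal 0 1))
    (Φ Ψ : (Fin d → ℝ) → ℝ) (hΦm : Measurable Φ) (hΨm : Measurable Ψ)
    (hΦb : ∃ C, ∀ x, |Φ x| ≤ C) (hΨb : ∃ C, ∀ x, |Ψ x| ≤ C)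
    (hmono : (Monotone Φ ∧ Monotone Ψ) ∨ (Antitone Φ ∧ Antitone Ψ)) :
    ∫ ω, Φ (A.mulVec (Z ω)) * Ψ (A.mulVec (Z ω)) ∂P
      ≥ (∫ ω, Φ (A.mulVec (Z ω)) ∂P) * ∫ ω, Ψ (A.mulVec (Z ω)) ∂P := by
  obtain ⟨Cf, hΦb⟩ := hΦb
  obtain ⟨Cg, hΨb⟩ := hΨb
  have hAm : Measurable (fun x : Fin r → ℝ => A.mulVec x) := by
    apply measurable_pi_iff.2
    intro i
    simp only [Matrix.mulVec, dotProduct]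
    exact Finset.measurable_sum _ fun j _ => (measurable_pi_apply j).const_mul _
  have hAmono : Monotone (fun x : Fin r → ℝ => A.mulVec x) := by
    intro x y hxy i
    simp only [Matrix.mulVec, dotProduct]
    exact Finset.sum_le_sum fun j _ => mul_le_mul_of_nonneg_left (hxy j) (hA i j)
  set f : (Fin r → ℝ) → ℝ := fun x => Φ (A.mulVec x) with hfdef
  set g : (Fin r → ℝ) → ℝ := fun x => Ψ (A.mulVec x) with hgdef
  have hfm : Measurable f := hΦm.comp hAm
  have hgm : Measurable g := hΨm.comp hAm
  have hfg_mono : (Monotone f ∧ Monotone g) ∨ (Antitone f ∧ Antitone g) := by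
    rcases hmono with ⟨h1, h2⟩ | ⟨h1, h2⟩
    · exact Or.inl ⟨h1.comp hAmono, h2.comp hAmono⟩
    · exact Or.inr ⟨h1.comp_monotone hAmono, h2.comp_monotone hAmono⟩
  have key := fkg_pi (fun _ : Fin r => gaussianReal 0 1) (fun _ => inferInstance)
    f g hfm hgm (Cf := Cf) (Cg := Cg) (fun x => hΦb _) (fun x => hΨb _) hfg_mono
  rw [← hZ] at key
  have h1 : ∫ x, f x ∂(Measure.map Z P) = ∫ ω, Φ (A.mulVec (Z ω)) ∂P :=
    integral_map hZm.aemeasurable hfm.aestronglyMeasurable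
  have h2 : ∫ x, g x ∂(Measure.map Z P) = ∫ ω, Ψ (A.mulVec (Z ω)) ∂P :=
    integral_map hZm.aemeasurable hgm.aestronglyMeasurable
  have h3 : ∫ x, f x * g x ∂(Measure.map Z P)
      = ∫ ω, Φ (A.mulVec (Z ω)) * Ψ (A.mulVec (Z ω)) ∂P :=
    integral_map hZm.aemeasurable (hfm.mul hgm).aestronglyMeasurable
  rw [h1, h2, h3] at key
  exact key
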